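/- Let S₁ and S₂ be unbordered strings over the same alphabet, let T₁ = S₁ P₁ ⋯ P_k where k ≥ 0 and each P_r is a nonempty prefix of S₁, and let T₂ = S₂ Q₁ ⋯ Q_l where l ≥ 0 and each Q_r is a nonempty prefix of S₂. If T₁ = T₂ then S₁ = S₂. -/

import Mathlib

open List Finset Filter

/-- `S` is unbordered: it has no nonempty proper prefix that is also a suffix. -/
def Unbordered {α : Type*} (S : List α) : Prop :=
  ∀ B : List α, B ≠ [] → B.length < S.length → B <+: S → ¬ B <:+ S

/-- The length of the maximal unbordered factor of `S`. -/
noncomputable def muf {α : Type*} (S : List α) : ℕ :=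
  sSup {k | ∃ F : List α, F <:+: S ∧ Unbordered F ∧ F.length = k}

private lemma suffix_prefix_aux {α : Type*} (S₁ : List α) :
    ∀ L : List (List α), (∀ P ∈ L, P ≠ [] ∧ P <+: S₁) →
    ∀ R : List α, R ≠ [] → R <+: L.flatten →
    ∃ P : List α, P ≠ [] ∧ P <+: S₁ ∧ P <:+ R := by
  intro L
  induction L with
  | nil =>
    intro _ R hR hpre
    simp only [List.flatten_nil, List.prefix_nil] at hpre
    exact absurd hpre hR
  | cons P₀ L' ih =>
    intro hL R hR hpre
    simp only [List.flatten_cons] at hpre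
    by_cases hlen : R.length ≤ P₀.length
    · refine ⟨R, hR, ?_, List.suffix_refl R⟩
      have hRP₀ : R <+: P₀ :=
        List.prefix_of_prefix_length_le hpre (List.prefix_append P₀ L'.flatten) hlen
      exact hRP₀.trans (hL P₀ List.mem_cons_self).2
    · push_neg at hlen
      have hP₀R : P₀ <+: R :=
        List.prefix_of_prefix_length_le (List.prefix_append P₀ L'.flatten) hpre hlen.le
      obtain ⟨R', rfl⟩ := hP₀R
      have hR' : R' ≠ [] := by
        intro h; subst h; simp at hlen
      have hR'pre : R' <+: L'.flatten := by
        rwa [List.prefix_append_right_inj] at hpre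
      obtain ⟨P, hP1, hP2, hP3⟩ := ih (fun P hP => hL P (List.mem_cons_of_mem _ hP)) R' hR' hR'pre
      exact ⟨P, hP1, hP2, hP3.trans (List.suffix_append P₀ R')⟩

private lemma key_lemma {α : Type*} (S₁ S₂ : List α)
    (h₂ : Unbordered S₂) (L₁ L₂ : List (List α))
    (hL₁ : ∀ P ∈ L₁, P ≠ [] ∧ P <+: S₁)
    (heq : S₁ ++ L₁.flatten = S₂ ++ L₂.flatten)
    (hle : S₁.length ≤ S₂.length) : S₁ = S₂ := by
  have hS₂pre : S₂ <+: S₁ ++ L₁.flatten := by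
    rw [heq]; exact List.prefix_append S₂ L₂.flatten
  have hS₁S₂ : S₁ <+: S₂ :=
    List.prefix_of_prefix_length_le (List.prefix_append S₁ L₁.flatten) hS₂pre hle
  rcases eq_or_lt_of_le hle with hlen | hlen
  · exact hS₁S₂.eq_of_length hlen
  · exfalso
    obtain ⟨R, rfl⟩ := hS₁S₂
    have hR : R ≠ [] := by
      intro h; subst h; simp at hlen
    have hRpre : R <+: L₁.flatten := by
      rwa [List.prefix_append_right_inj] at hS₂pre
    obtain ⟨P, hP1, hP2, hP3⟩ := suffix_prefix_aux S₁ L₁ hL₁ R hR hRpre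
    refine h₂ P hP1 ?_ (hP2.trans (List.prefix_append S₁ R)) (hP3.trans (List.suffix_append S₁ R))
    calc P.length ≤ S₁.length := hP2.length_le
      _ < (S₁ ++ R).length := hlen

theorem generated_strings_distinct {α : Type*} (S₁ S₂ : List α)
    (h₁ : Unbordered S₁) (h₂ : Unbordered S₂) (L₁ L₂ : List (List α))
    (hL₁ : ∀ P ∈ L₁, P ≠ [] ∧ P <+: S₁) (hL₂ : ∀ Q ∈ L₂, Q ≠ [] ∧ Q <+: S₂)
    (heq : S₁ ++ L₁.flatten = S₂ ++ L₂.flatten) : S₁ = S₂ := by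
  rcases le_total S₁.length S₂.length with h | h
  · exact key_lemma S₁ S₂ h₂ L₁ L₂ hL₁ heq h
  · exact (key_lemma S₂ S₁ h₁ L₂ L₁ hL₂ heq.symm h).symm
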